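/- Let 0 < H₁ < H₂ < 1 and define ψ_H(t) = 4 sin²(πt) · ( ∑_{n=0}^∞ (n+t)^{-(2H+1)} + ∑_{n=0}^∞ (n+1−t)^{-(2H+1)} ) for t ∈ (0,1). Then ψ_{H₁}(t)/ψ_{H₂}(t) → 0 as t → 0⁺ and ψ_{H₁}(t)/ψ_{H₂}(t) → 0 as t → 1⁻. -/

import Mathlib

/-- The spectral density (up to a normalizing constant) of fractional Gaussian noise of
Hurst index `H`, defined for `t ∈ (0,1)`:
`ψ_H(t) = 4 sin²(πt)·(∑_{n≥0} (n+t)^{-(2H+1)} + ∑_{n≥0} (n+1−t)^{-(2H+1)})`. -/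
noncomputable def psi (H t : ℝ) : ℝ :=
  4 * Real.sin (Real.pi * t) ^ 2 *
    ((∑' n : ℕ, ((n : ℝ) + t) ^ (-(2 * H + 1))) +
      ∑' n : ℕ, ((n : ℝ) + 1 - t) ^ (-(2 * H + 1)))

open Real Filter Set

lemma summable_aux {p c : ℝ} (hp : 1 < p) (hc : 0 < c) :
    Summable (fun n : ℕ => ((n : ℝ) + c) ^ (-p)) := by
  have h0 : Summable (fun n : ℕ => ((n : ℝ)) ^ (-p)) :=
    Real.summable_nat_rpow.mpr (by linarith)
  have h1 : Summable (fun n : ℕ => (((n + 1 : ℕ) : ℝ)) ^ (-p)) :=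
    (summable_nat_add_iff 1).mpr h0
  rcases le_or_gt 1 c with hc1 | hc1
  · refine Summable.of_nonneg_of_le (f := fun n : ℕ => (((n + 1 : ℕ) : ℝ)) ^ (-p))
      (fun n => by positivity) (fun n => ?_) h1
    exact Real.rpow_le_rpow_of_nonpos (by positivity) (by push_cast; linarith) (by linarith)
  · -- scale: (n + c) ≥ c * (n + 1) since c < 1
    refine Summable.of_nonneg_of_le
      (f := fun n : ℕ => c ^ (-p) * (((n + 1 : ℕ) : ℝ)) ^ (-p))
      (fun n => by positivity) (fun n => ?_) (h1.mul_left _)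
    show ((n : ℝ) + c) ^ (-p) ≤ c ^ (-p) * (((n + 1 : ℕ) : ℝ)) ^ (-p)
    rw [← Real.mul_rpow (le_of_lt hc) (by positivity)]
    apply Real.rpow_le_rpow_of_nonpos (by positivity) ?_ (by linarith)
    push_cast
    nlinarith [Nat.cast_nonneg (α := ℝ) n]

lemma tsum_aux_le {p c d : ℝ} (hp : 1 < p) (hc : 0 < c) (hcd : c ≤ d) :
    (∑' n : ℕ, ((n : ℝ) + d) ^ (-p)) ≤ ∑' n : ℕ, ((n : ℝ) + c) ^ (-p) := by
  apply Summable.tsum_le_tsum _ (summable_aux hp (lt_of_lt_of_le hc hcd)) (summable_aux hp hc)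
  intro n
  exact Real.rpow_le_rpow_of_nonpos (by positivity) (by linarith) (by linarith)

lemma psi_symm (H t : ℝ) : psi H (1 - t) = psi H t := by
  unfold psi
  have hs : Real.sin (Real.pi * (1 - t)) = Real.sin (Real.pi * t) := by
    rw [show Real.pi * (1 - t) = Real.pi - Real.pi * t by ring, Real.sin_pi_sub]
  rw [hs]
  have h1 : (fun n : ℕ => ((n : ℝ) + (1 - t)) ^ (-(2 * H + 1)))
      = fun n : ℕ => ((n : ℝ) + 1 - t) ^ (-(2 * H + 1)) := by
    funext n; congr 1; ring
  have h2 : (fun n : ℕ => ((n : ℝ) + 1 - (1 - t)) ^ (-(2 * H + 1)))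
      = fun n : ℕ => ((n : ℝ) + t) ^ (-(2 * H + 1)) := by
    funext n; congr 1; ring
  rw [h1, h2, add_comm (∑' n : ℕ, ((n : ℝ) + 1 - t) ^ (-(2 * H + 1)))]

lemma psi_nonneg (H t : ℝ) (ht : t ∈ Set.Ioo (0:ℝ) 1) : 0 ≤ psi H t := by
  obtain ⟨ht0, ht1⟩ := ht
  unfold psi
  have h1 : (0:ℝ) ≤ ∑' n : ℕ, ((n : ℝ) + t) ^ (-(2 * H + 1)) :=
    tsum_nonneg fun n => by positivity
  have h2 : (0:ℝ) ≤ ∑' n : ℕ, ((n : ℝ) + 1 - t) ^ (-(2 * H + 1)) :=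
    tsum_nonneg fun n => by
      have : (0:ℝ) < (n : ℝ) + 1 - t := by
        have : (0:ℝ) ≤ (n : ℝ) := Nat.cast_nonneg n
        linarith
      positivity
  positivity

/-- For `0 < H₁ < H₂ < 1`, the ratio `ψ_{H₁}(t)/ψ_{H₂}(t)` tends to `0`
as `t → 0⁺` and as `t → 1⁻`. -/
theorem stmt6 (H₁ H₂ : ℝ) (h1 : 0 < H₁) (h12 : H₁ < H₂) (h2 : H₂ < 1) :
    Filter.Tendsto (fun t => psi H₁ t / psi H₂ t)
      (nhdsWithin 0 (Set.Ioo (0 : ℝ) 1)) (nhds 0) ∧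
    Filter.Tendsto (fun t => psi H₁ t / psi H₂ t)
      (nhdsWithin 1 (Set.Ioo (0 : ℝ) 1)) (nhds 0) := by
  set p₁ := 2 * H₁ + 1 with hp₁def
  set p₂ := 2 * H₂ + 1 with hp₂def
  have hp₁ : 1 < p₁ := by rw [hp₁def]; linarith
  have hp₂ : 1 < p₂ := by rw [hp₂def]; linarith
  have hp12 : p₁ < p₂ := by rw [hp₁def, hp₂def]; linarith
  set C : ℝ := (∑' n : ℕ, ((n : ℝ) + 1) ^ (-p₁)) + ∑' n : ℕ, ((n : ℝ) + 1/2) ^ (-p₁) with hCdef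
  have hC : 0 ≤ C := by
    apply add_nonneg <;> exact tsum_nonneg fun n => by positivity
  set g : ℝ → ℝ := fun t => (t ^ (p₂ - p₁) + C * t ^ p₂) with hgdef
  have hgt : Filter.Tendsto g (nhdsWithin 0 (Set.Ioo (0:ℝ) 1)) (nhds 0) := by
    have hcont : ContinuousAt g 0 := by
      apply ContinuousAt.add
      · exact Real.continuousAt_rpow_const 0 _ (Or.inr (by linarith))
      · exact continuousAt_const.mul (Real.continuousAt_rpow_const 0 _ (Or.inr (by linarith)))
    have hg0 : g 0 = 0 := by
      simp only [hgdef]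
      rw [Real.zero_rpow (by linarith), Real.zero_rpow (by linarith)]
      ring
    have h := hcont.tendsto
    rw [hg0] at h
    exact h.mono_left nhdsWithin_le_nhds
  have key : ∀ t ∈ Set.Ioo (0:ℝ) 1, t < 1/2 → psi H₁ t / psi H₂ t ≤ g t := by
    intro t ht ht2
    obtain ⟨ht0, ht1⟩ := ht
    have hsin : 0 < Real.sin (Real.pi * t) :=
      Real.sin_pos_of_pos_of_lt_pi (by positivity)
        (by nlinarith [Real.pi_pos])
    have hs4 : (0:ℝ) < 4 * Real.sin (Real.pi * t) ^ 2 := by positivity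
    have hnum : psi H₁ t ≤ 4 * Real.sin (Real.pi * t) ^ 2 * (t ^ (-p₁) + C) := by
      unfold psi
      rw [← hp₁def]
      apply mul_le_mul_of_nonneg_left _ (le_of_lt hs4)
      rw [hCdef]
      have hA : (∑' n : ℕ, ((n : ℝ) + t) ^ (-p₁))
          ≤ t ^ (-p₁) + ∑' n : ℕ, ((n : ℝ) + 1) ^ (-p₁) := by
        rw [Summable.tsum_eq_zero_add (summable_aux hp₁ ht0)]
        apply add_le_add
        · norm_num
        · apply Summable.tsum_le_tsum _ _ (summable_aux hp₁ one_pos)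
          · intro n
            apply Real.rpow_le_rpow_of_nonpos (by positivity) ?_ (by linarith)
            push_cast; linarith
          · exact (summable_aux hp₁ (show (0:ℝ) < 1 + t by linarith)).congr
              (fun n => by push_cast; rw [← add_assoc])
      have hB : (∑' n : ℕ, ((n : ℝ) + 1 - t) ^ (-p₁))
          ≤ ∑' n : ℕ, ((n : ℝ) + 1/2) ^ (-p₁) := by
        apply Summable.tsum_le_tsum _ _ (summable_aux hp₁ (by norm_num : (0:ℝ) < 1/2))
        · intro n
          apply Real.rpow_le_rpow_of_nonpos ?_ (by linarith) (by linarith)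
          have : (0:ℝ) ≤ (n : ℝ) := Nat.cast_nonneg n
          positivity
        · exact (summable_aux hp₁ (show (0:ℝ) < 1 - t by linarith)).congr
            (fun n => by congr 1; ring)
      linarith
    have hden : 4 * Real.sin (Real.pi * t) ^ 2 * t ^ (-p₂) ≤ psi H₂ t := by
      unfold psi
      rw [← hp₂def]
      apply mul_le_mul_of_nonneg_left _ (le_of_lt hs4)
      have hfirst : t ^ (-p₂) ≤ ∑' n : ℕ, ((n : ℝ) + t) ^ (-p₂) := by
        have h := Summable.le_tsum (summable_aux hp₂ ht0) 0
          (fun j _ => Real.rpow_nonneg (by positivity) _)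
        simpa using h
      have h2' : (0:ℝ) ≤ ∑' n : ℕ, ((n : ℝ) + 1 - t) ^ (-p₂) :=
        tsum_nonneg fun n => Real.rpow_nonneg
          (by have : (0:ℝ) ≤ (n : ℝ) := Nat.cast_nonneg n; linarith) _
      linarith
    have hdenpos : 0 < 4 * Real.sin (Real.pi * t) ^ 2 * t ^ (-p₂) := by positivity
    calc psi H₁ t / psi H₂ t
        ≤ (4 * Real.sin (Real.pi * t) ^ 2 * (t ^ (-p₁) + C)) /
            (4 * Real.sin (Real.pi * t) ^ 2 * t ^ (-p₂)) :=
          div_le_div₀ (by positivity) hnum hdenpos hden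
      _ = (t ^ (-p₁) + C) / t ^ (-p₂) := by
          rw [mul_div_mul_left _ _ (ne_of_gt hs4)]
      _ = g t := by
          simp only [hgdef]
          rw [div_eq_iff (by positivity : (t:ℝ) ^ (-p₂) ≠ 0), add_mul, mul_assoc,
            ← Real.rpow_add ht0, ← Real.rpow_add ht0,
            show p₂ - p₁ + -p₂ = -p₁ by ring, show p₂ + -p₂ = (0:ℝ) by ring,
            Real.rpow_zero, mul_one]
  have first : Filter.Tendsto (fun t => psi H₁ t / psi H₂ t)
      (nhdsWithin 0 (Set.Ioo (0 : ℝ) 1)) (nhds 0) := by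
    apply tendsto_of_tendsto_of_tendsto_of_le_of_le' tendsto_const_nhds hgt
    · filter_upwards [self_mem_nhdsWithin] with t ht
      exact div_nonneg (psi_nonneg _ _ ht) (psi_nonneg _ _ ht)
    · filter_upwards [self_mem_nhdsWithin,
        eventually_nhdsWithin_of_eventually_nhds (eventually_lt_nhds (by norm_num : (0:ℝ) < 1/2))]
        with t ht ht2
      exact key t ht ht2
  refine ⟨first, ?_⟩
  have hmap : Filter.Tendsto (fun t : ℝ => 1 - t)
      (nhdsWithin 1 (Set.Ioo (0:ℝ) 1)) (nhdsWithin 0 (Set.Ioo (0:ℝ) 1)) := by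
    rw [tendsto_nhdsWithin_iff]
    constructor
    · have hcont : Filter.Tendsto (fun t : ℝ => 1 - t) (nhds 1) (nhds 0) := by
        have h := ((continuous_const (y := (1:ℝ))).sub continuous_id).tendsto (1:ℝ)
        convert h using 2; rfl; exact (sub_self (1:ℝ)).symm
      exact hcont.mono_left nhdsWithin_le_nhds
    · filter_upwards [self_mem_nhdsWithin] with t ht
      exact ⟨by linarith [ht.2], by linarith [ht.1]⟩
  have hcomp := first.comp hmap
  apply hcomp.congr
  intro t
  simp only [Function.comp_apply, psi_symm]
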